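/- Let U be an evolution family on a Banach space X with an exponential dichotomy with constants N ≥ 1, δ > 0, and suppose in addition that for each x ∈ X the maps (t,s) ↦ U(t,s)P(s)x (for t ≥ s) and (t,s) ↦ U_Q(t,s)Q(s)x (for t ≤ s) are continuous. Then for every bounded continuous g : ℝ → X, the formula φ(t) := ∫_{−∞}^{t} U(t,s)P(s)g(s) ds − ∫_{t}^{∞} U_Q(t,s)Q(s)g(s) ds defines, via absolutely convergent Bochner integrals, a bounded continuous function φ : ℝ → X satisfying φ(t) = U(t,s)φ(s) + ∫_{s}^{t} U(t,τ)g(τ) dτ for all t ≥ s; moreover sup_t ‖φ(t)‖ ≤ (2N/δ) sup_t ‖g(t)‖. -/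

import Mathlib

open MeasureTheory Filter Topology Bornology

noncomputable section

section GreensHelpers
open Set Real

private lemma strong_cont_apply {X : Type*} [NormedAddCommGroup X] [NormedSpace ℝ X]
    {ι : Type*} [TopologicalSpace ι] {A : ι → X →L[ℝ] X} {S : Set ι} {C : ℝ}
    {h : ι → X}
    (hbound : ∀ i ∈ S, ∀ x, ‖A i x‖ ≤ C * ‖x‖)
    (hA : ∀ x, ContinuousOn (fun i => A i x) S)
    (hh : Continuous h) :
    ContinuousOn (fun i => A i (h i)) S := by
  intro i₀ hi₀
  rw [ContinuousWithinAt, tendsto_iff_norm_sub_tendsto_zero]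
  apply squeeze_zero'
    (g := fun i => C * ‖h i - h i₀‖ + ‖A i (h i₀) - A i₀ (h i₀)‖)
    (Eventually.of_forall fun _ => norm_nonneg _)
  · filter_upwards [eventually_mem_nhdsWithin] with i hi
    have e : A i (h i) - A i₀ (h i₀) = A i (h i - h i₀) + (A i (h i₀) - A i₀ (h i₀)) := by
      rw [map_sub]; abel
    rw [e]
    exact (norm_add_le _ _).trans (add_le_add_left (hbound i hi _) _)
  · have l1 : Tendsto (fun i => C * ‖h i - h i₀‖) (𝓝[S] i₀) (𝓝 (C * 0)) :=
      tendsto_const_nhds.mul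
        (tendsto_iff_norm_sub_tendsto_zero.1 ((hh.tendsto i₀).mono_left nhdsWithin_le_nhds))
    have l2 : Tendsto (fun i => ‖A i (h i₀) - A i₀ (h i₀)‖) (𝓝[S] i₀) (𝓝 0) :=
      tendsto_iff_norm_sub_tendsto_zero.1 (hA (h i₀) i₀ hi₀)
    simpa using l1.add l2

private lemma bs_bound {X : Type*} [NormedAddCommGroup X] [NormedSpace ℝ X] [CompleteSpace X]
    {A : ℝ → X →L[ℝ] X} {a b : ℝ} (hA : ∀ x, ContinuousOn (fun τ => A τ x) (Set.Icc a b)) :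
    ∃ C : ℝ, ∀ τ ∈ Set.Icc a b, ∀ x : X, ‖A τ x‖ ≤ C * ‖x‖ := by
  obtain ⟨C, hC⟩ := banach_steinhaus (g := fun i : Set.Icc a b => A i) (fun x => by
    rcases isCompact_Icc.exists_bound_of_continuousOn (hA x) with ⟨C, hC⟩
    exact ⟨C, fun i => hC i i.2⟩)
  exact ⟨C, fun τ hτ x =>
    ((A τ).le_opNorm x).trans (mul_le_mul_of_nonneg_right (hC ⟨τ, hτ⟩) (norm_nonneg x))⟩

end GreensHelpers

theorem greens_function_formula_bounded_mild_solution
    {X : Type*} [NormedAddCommGroup X] [NormedSpace ℝ X] [CompleteSpace X]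
    (U : ℝ → ℝ → X →L[ℝ] X)
    -- `U` is an evolution family on `X`
    (hUid : ∀ t : ℝ, U t t = ContinuousLinearMap.id ℝ X)
    (hUcomp : ∀ t s r : ℝ, r ≤ s → s ≤ t → (U t s).comp (U s r) = U t r)
    (hUcont : ∀ x : X, ContinuousOn (fun p : ℝ × ℝ => U p.1 p.2 x) {p : ℝ × ℝ | p.2 ≤ p.1})
    -- exponential dichotomy data: projections `P t` and inverses `UQ t s` (`t ≤ s`) of the
    -- restriction of `U s t` to the range of `Q t = I - P t`
    (P : ℝ → X →L[ℝ] X) (UQ : ℝ → ℝ → X →L[ℝ] X) (N δ : ℝ) (hN : 1 ≤ N) (hδ : 0 < δ)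
    (hPproj : ∀ t : ℝ, (P t).comp (P t) = P t)
    (hPbdd : ∃ M : ℝ, ∀ t : ℝ, ‖P t‖ ≤ M)
    (hPcont : ∀ x : X, Continuous fun t : ℝ => P t x)
    (hPU : ∀ t s : ℝ, s ≤ t → (U t s).comp (P s) = (P t).comp (U t s))
    (hUQrange : ∀ t s : ℝ, t ≤ s → ∀ x : X, P t (UQ t s (x - P s x)) = 0)
    (hUQleft : ∀ t s : ℝ, t ≤ s → ∀ x : X, U s t (UQ t s (x - P s x)) = x - P s x)
    (hUQright : ∀ t s : ℝ, t ≤ s → ∀ x : X, UQ t s (U s t x - P s (U s t x)) = x - P t x)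
    (hdich1 : ∀ t s : ℝ, s ≤ t → ∀ x : X, ‖U t s (P s x)‖ ≤ N * Real.exp (-δ * (t - s)) * ‖x‖)
    (hdich2 : ∀ t s : ℝ, t ≤ s → ∀ x : X,
      ‖UQ t s (x - P s x)‖ ≤ N * Real.exp (-δ * (s - t)) * ‖x‖)
    -- additional continuity of the Green's function pieces
    (hUPcont : ∀ x : X,
      ContinuousOn (fun p : ℝ × ℝ => U p.1 p.2 (P p.2 x)) {p : ℝ × ℝ | p.2 ≤ p.1})
    (hUQcont : ∀ x : X,
      ContinuousOn (fun p : ℝ × ℝ => UQ p.1 p.2 (x - P p.2 x)) {p : ℝ × ℝ | p.1 ≤ p.2})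
    -- `g` bounded continuous
    (g : ℝ → X) (hgcont : Continuous g) (hgbdd : ∃ M : ℝ, ∀ t : ℝ, ‖g t‖ ≤ M) :
    (∀ t : ℝ, IntegrableOn (fun s => U t s (P s (g s))) (Set.Iio t)) ∧
    (∀ t : ℝ, IntegrableOn (fun s => UQ t s (g s - P s (g s))) (Set.Ioi t)) ∧
    ∃ φ : ℝ → X,
      (∀ t : ℝ, φ t = (∫ s in Set.Iio t, U t s (P s (g s))) -
          ∫ s in Set.Ioi t, UQ t s (g s - P s (g s))) ∧
      Continuous φ ∧
      (∀ M : ℝ, (∀ t : ℝ, ‖g t‖ ≤ M) → ∀ t : ℝ, ‖φ t‖ ≤ (2 * N / δ) * M) ∧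
      (∀ t s : ℝ, s ≤ t → φ t = U t s (φ s) + ∫ τ in s..t, U t τ (g τ)) := by
  obtain ⟨M₀, hM₀⟩ := hgbdd
  -- dichotomy bounds with explicit `N * ‖x‖` form on the half planes
  have hb1 : ∀ p : ℝ × ℝ, p ∈ {p : ℝ × ℝ | p.2 ≤ p.1} →
      ∀ x : X, ‖((U p.1 p.2).comp (P p.2)) x‖ ≤ N * ‖x‖ := by
    intro p hp x
    refine (hdich1 p.1 p.2 hp x).trans ?_
    have h1 : Real.exp (-δ * (p.1 - p.2)) ≤ 1 := by
      apply Real.exp_le_one_iff.mpr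
      have : (0:ℝ) ≤ p.1 - p.2 := sub_nonneg.mpr hp
      nlinarith [hδ.le]
    have h2 := mul_le_mul_of_nonneg_right
      (mul_le_mul_of_nonneg_left h1 (le_trans zero_le_one hN)) (norm_nonneg x)
    simpa using h2
  have hb2 : ∀ p : ℝ × ℝ, p ∈ {p : ℝ × ℝ | p.1 ≤ p.2} →
      ∀ x : X, ‖((UQ p.1 p.2).comp (ContinuousLinearMap.id ℝ X - P p.2)) x‖ ≤ N * ‖x‖ := by
    intro p hp x
    have := hdich2 p.1 p.2 hp x
    simp only [ContinuousLinearMap.comp_apply, ContinuousLinearMap.sub_apply,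
      ContinuousLinearMap.id_apply]
    refine this.trans ?_
    have h1 : Real.exp (-δ * (p.2 - p.1)) ≤ 1 := by
      apply Real.exp_le_one_iff.mpr
      have : (0:ℝ) ≤ p.2 - p.1 := sub_nonneg.mpr hp
      nlinarith [hδ.le]
    have h2 := mul_le_mul_of_nonneg_right
      (mul_le_mul_of_nonneg_left h1 (le_trans zero_le_one hN)) (norm_nonneg x)
    simpa using h2
  -- joint continuity of the Green's function pieces applied to `g`
  have hG1cont : ContinuousOn (fun p : ℝ × ℝ => U p.1 p.2 (P p.2 (g p.2)))
      {p : ℝ × ℝ | p.2 ≤ p.1} := by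
    have := strong_cont_apply (A := fun p : ℝ × ℝ => (U p.1 p.2).comp (P p.2))
      (S := {p : ℝ × ℝ | p.2 ≤ p.1}) (h := fun p => g p.2) hb1
      (fun x => hUPcont x) (hgcont.comp continuous_snd)
    simpa using this
  have hG2cont : ContinuousOn (fun p : ℝ × ℝ => UQ p.1 p.2 (g p.2 - P p.2 (g p.2)))
      {p : ℝ × ℝ | p.1 ≤ p.2} := by
    have := strong_cont_apply
      (A := fun p : ℝ × ℝ => (UQ p.1 p.2).comp (ContinuousLinearMap.id ℝ X - P p.2))
      (S := {p : ℝ × ℝ | p.1 ≤ p.2}) (h := fun p => g p.2) hb2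
      (fun x => by simpa using hUQcont x) (hgcont.comp continuous_snd)
    simpa using this
  -- change-of-variables machinery
  have emb1 : ∀ t : ℝ, MeasurableEmbedding (fun r : ℝ => t - r) :=
    fun t => (Homeomorph.subLeft t).measurableEmbedding
  have mp1 : ∀ t : ℝ, MeasurePreserving (fun r : ℝ => t - r) volume volume :=
    fun t => Measure.measurePreserving_sub_left volume t
  have emb2 : ∀ t : ℝ, MeasurableEmbedding (fun r : ℝ => t + r) :=
    fun t => (Homeomorph.addLeft t).measurableEmbedding
  have mp2 : ∀ t : ℝ, MeasurePreserving (fun r : ℝ => t + r) volume volume :=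
    fun t => measurePreserving_add_left volume t
  have pre1 : ∀ t : ℝ, (fun r : ℝ => t - r) ⁻¹' (Set.Iio t) = Set.Ioi 0 := by
    intro t; ext r; simp
  have pre2 : ∀ t : ℝ, (fun r : ℝ => t + r) ⁻¹' (Set.Ioi t) = Set.Ioi 0 := by
    intro t; ext r; simp
  have base : ∀ c : ℝ, IntegrableOn (fun r : ℝ => c * Real.exp (-δ * r)) (Set.Ioi 0) :=
    fun c => (exp_neg_integrableOn_Ioi 0 hδ).const_mul c
  -- pointwise norm bounds
  have hbound1 : ∀ M : ℝ, (∀ u : ℝ, ‖g u‖ ≤ M) → ∀ t : ℝ, ∀ s ∈ Set.Iic t,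
      ‖U t s (P s (g s))‖ ≤ N * M * Real.exp (-δ * (t - s)) := by
    intro M hM t s hs
    refine (hdich1 t s hs (g s)).trans ?_
    have h2 := mul_le_mul_of_nonneg_left (hM s)
      (mul_nonneg (le_trans zero_le_one hN) (Real.exp_pos (-δ * (t - s))).le)
    calc N * Real.exp (-δ * (t - s)) * ‖g s‖ ≤ N * Real.exp (-δ * (t - s)) * M := by
          rw [mul_assoc] at h2 ⊢; exact h2
      _ = N * M * Real.exp (-δ * (t - s)) := by ring
  have hbound2 : ∀ M : ℝ, (∀ u : ℝ, ‖g u‖ ≤ M) → ∀ t : ℝ, ∀ s ∈ Set.Ici t,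
      ‖UQ t s (g s - P s (g s))‖ ≤ N * M * Real.exp (-δ * (s - t)) := by
    intro M hM t s hs
    refine (hdich2 t s hs (g s)).trans ?_
    have h2 := mul_le_mul_of_nonneg_left (hM s)
      (mul_nonneg (le_trans zero_le_one hN) (Real.exp_pos (-δ * (s - t))).le)
    calc N * Real.exp (-δ * (s - t)) * ‖g s‖ ≤ N * Real.exp (-δ * (s - t)) * M := by
          rw [mul_assoc] at h2 ⊢; exact h2
      _ = N * M * Real.exp (-δ * (s - t)) := by ring
  -- integrability of the dominating functions
  have hdom1 : ∀ t c : ℝ, IntegrableOn (fun s : ℝ => c * Real.exp (-δ * (t - s))) (Set.Iio t) := by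
    intro t c
    refine ((mp1 t).integrableOn_comp_preimage (emb1 t)).mp ?_
    rw [pre1 t]
    simpa [Function.comp_def, sub_sub_cancel] using base c
  have hdom2 : ∀ t c : ℝ, IntegrableOn (fun s : ℝ => c * Real.exp (-δ * (s - t))) (Set.Ioi t) := by
    intro t c
    refine ((mp2 t).integrableOn_comp_preimage (emb2 t)).mp ?_
    rw [pre2 t]
    simpa [Function.comp_def, add_sub_cancel_left] using base c
  -- a.e. strong measurability
  have hmeas1 : ∀ t : ℝ, AEStronglyMeasurable (fun s => U t s (P s (g s)))
      (volume.restrict (Set.Iio t)) := by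
    intro t
    apply ContinuousOn.aestronglyMeasurable ?_ measurableSet_Iio
    exact ContinuousOn.comp (g := fun p : ℝ × ℝ => U p.1 p.2 (P p.2 (g p.2)))
      (f := fun s : ℝ => ((t, s) : ℝ × ℝ)) hG1cont
      (Continuous.continuousOn (by fun_prop)) (fun s hs => show (s:ℝ) ≤ t from le_of_lt hs)
  have hmeas2 : ∀ t : ℝ, AEStronglyMeasurable (fun s => UQ t s (g s - P s (g s)))
      (volume.restrict (Set.Ioi t)) := by
    intro t
    apply ContinuousOn.aestronglyMeasurable ?_ measurableSet_Ioi
    exact ContinuousOn.comp (g := fun p : ℝ × ℝ => UQ p.1 p.2 (g p.2 - P p.2 (g p.2)))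
      (f := fun s : ℝ => ((t, s) : ℝ × ℝ)) hG2cont
      (Continuous.continuousOn (by fun_prop)) (fun s hs => show t ≤ (s:ℝ) from le_of_lt hs)
  -- integrability
  have hi1 : ∀ t : ℝ, IntegrableOn (fun s => U t s (P s (g s))) (Set.Iio t) := by
    intro t
    exact Integrable.mono' (hdom1 t (N * M₀)) (hmeas1 t)
      ((ae_restrict_mem measurableSet_Iio).mono fun s hs => hbound1 M₀ hM₀ t s (Set.mem_Iic.mpr (le_of_lt hs)))
  have hi2 : ∀ t : ℝ, IntegrableOn (fun s => UQ t s (g s - P s (g s))) (Set.Ioi t) := by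
    intro t
    exact Integrable.mono' (hdom2 t (N * M₀)) (hmeas2 t)
      ((ae_restrict_mem measurableSet_Ioi).mono fun s hs => hbound2 M₀ hM₀ t s (Set.mem_Ici.mpr (le_of_lt hs)))
  -- values of the dominating integrals
  have hval1 : ∀ t c : ℝ, (∫ s in Set.Iio t, c * Real.exp (-δ * (t - s))) = c / δ := by
    intro t c
    have h := (mp1 t).setIntegral_preimage_emb (emb1 t)
      (fun s => c * Real.exp (-δ * (t - s))) (Set.Iio t)
    rw [← h, pre1 t]
    simp only [sub_sub_cancel]
    rw [MeasureTheory.integral_const_mul]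
    have h2 : (∫ r in Set.Ioi (0:ℝ), Real.exp (-δ * r)) = 1 / δ := by
      have h3 := integral_comp_mul_left_Ioi (fun y => Real.exp (-y)) 0 hδ
      simp only [mul_zero, neg_mul] at h3 ⊢
      rw [h3, integral_exp_neg_Ioi_zero, smul_eq_mul, mul_one, one_div]
    rw [h2]; ring
  have hval2 : ∀ t c : ℝ, (∫ s in Set.Ioi t, c * Real.exp (-δ * (s - t))) = c / δ := by
    intro t c
    have h := (mp2 t).setIntegral_preimage_emb (emb2 t)
      (fun s => c * Real.exp (-δ * (s - t))) (Set.Ioi t)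
    rw [← h, pre2 t]
    simp only [add_sub_cancel_left]
    rw [MeasureTheory.integral_const_mul]
    have h2 : (∫ r in Set.Ioi (0:ℝ), Real.exp (-δ * r)) = 1 / δ := by
      have h3 := integral_comp_mul_left_Ioi (fun y => Real.exp (-y)) 0 hδ
      simp only [mul_zero, neg_mul] at h3 ⊢
      rw [h3, integral_exp_neg_Ioi_zero, smul_eq_mul, mul_one, one_div]
    rw [h2]; ring
  -- representation of the integrals after change of variables
  have repr1 : ∀ t : ℝ, (∫ s in Set.Iio t, U t s (P s (g s)))
      = ∫ r in Set.Ioi (0:ℝ), U t (t - r) (P (t - r) (g (t - r))) := by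
    intro t
    have h := (mp1 t).setIntegral_preimage_emb (emb1 t)
      (fun s => U t s (P s (g s))) (Set.Iio t)
    rw [← h, pre1 t]
  have repr2 : ∀ t : ℝ, (∫ s in Set.Ioi t, UQ t s (g s - P s (g s)))
      = ∫ r in Set.Ioi (0:ℝ), UQ t (t + r) (g (t + r) - P (t + r) (g (t + r))) := by
    intro t
    have h := (mp2 t).setIntegral_preimage_emb (emb2 t)
      (fun s => UQ t s (g s - P s (g s))) (Set.Ioi t)
    rw [← h, pre2 t]
  -- continuity of the two halves
  have hcont1 : Continuous fun t : ℝ =>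
      ∫ r in Set.Ioi (0:ℝ), U t (t - r) (P (t - r) (g (t - r))) := by
    rw [continuous_iff_continuousAt]
    intro t₀
    apply continuousAt_of_dominated (bound := fun r => N * M₀ * Real.exp (-δ * r))
    · filter_upwards with t
      apply ContinuousOn.aestronglyMeasurable ?_ measurableSet_Ioi
      exact ContinuousOn.comp (g := fun p : ℝ × ℝ => U p.1 p.2 (P p.2 (g p.2)))
        (f := fun r : ℝ => ((t, t - r) : ℝ × ℝ)) hG1cont
        (Continuous.continuousOn (by fun_prop))
        (fun r hr => show t - r ≤ t by
          have : (0:ℝ) < r := hr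
          linarith)
    · filter_upwards with t
      refine (ae_restrict_mem measurableSet_Ioi).mono fun r hr => ?_
      have hr' : (0:ℝ) < r := hr
      have h := hbound1 M₀ hM₀ t (t - r) (Set.mem_Iic.mpr (by linarith))
      simpa [sub_sub_cancel] using h
    · exact base (N * M₀)
    · refine (ae_restrict_mem measurableSet_Ioi).mono fun r hr => ?_
      have hr' : (0:ℝ) < r := hr
      have hmem : {p : ℝ × ℝ | p.2 ≤ p.1} ∈ 𝓝 ((t₀, t₀ - r) : ℝ × ℝ) := by
        apply mem_of_superset ((isOpen_lt continuous_snd continuous_fst).mem_nhds ?_)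
          (fun p hp => le_of_lt hp)
        show t₀ - r < t₀
        linarith
      have hca : ContinuousAt (fun p : ℝ × ℝ => U p.1 p.2 (P p.2 (g p.2))) (t₀, t₀ - r) :=
        hG1cont.continuousAt hmem
      exact ContinuousAt.comp (f := fun x : ℝ => ((x, x - r) : ℝ × ℝ)) hca
        (Continuous.continuousAt (by fun_prop))
  have hcont2 : Continuous fun t : ℝ =>
      ∫ r in Set.Ioi (0:ℝ), UQ t (t + r) (g (t + r) - P (t + r) (g (t + r))) := by
    rw [continuous_iff_continuousAt]
    intro t₀
    apply continuousAt_of_dominated (bound := fun r => N * M₀ * Real.exp (-δ * r))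
    · filter_upwards with t
      apply ContinuousOn.aestronglyMeasurable ?_ measurableSet_Ioi
      exact ContinuousOn.comp (g := fun p : ℝ × ℝ => UQ p.1 p.2 (g p.2 - P p.2 (g p.2)))
        (f := fun r : ℝ => ((t, t + r) : ℝ × ℝ)) hG2cont
        (Continuous.continuousOn (by fun_prop))
        (fun r hr => show t ≤ t + r by
          have : (0:ℝ) < r := hr
          linarith)
    · filter_upwards with t
      refine (ae_restrict_mem measurableSet_Ioi).mono fun r hr => ?_
      have hr' : (0:ℝ) < r := hr
      have h := hbound2 M₀ hM₀ t (t + r) (Set.mem_Ici.mpr (by linarith))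
      simpa [add_sub_cancel_left] using h
    · exact base (N * M₀)
    · refine (ae_restrict_mem measurableSet_Ioi).mono fun r hr => ?_
      have hr' : (0:ℝ) < r := hr
      have hmem : {p : ℝ × ℝ | p.1 ≤ p.2} ∈ 𝓝 ((t₀, t₀ + r) : ℝ × ℝ) := by
        apply mem_of_superset ((isOpen_lt continuous_fst continuous_snd).mem_nhds ?_)
          (fun p hp => le_of_lt hp)
        show t₀ < t₀ + r
        linarith
      have hca : ContinuousAt (fun p : ℝ × ℝ => UQ p.1 p.2 (g p.2 - P p.2 (g p.2)))
          (t₀, t₀ + r) := hG2cont.continuousAt hmem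
      exact ContinuousAt.comp (f := fun x : ℝ => ((x, x + r) : ℝ × ℝ)) hca
        (Continuous.continuousAt (by fun_prop))
  refine ⟨hi1, hi2, fun t => (∫ s in Set.Iio t, U t s (P s (g s))) -
      ∫ s in Set.Ioi t, UQ t s (g s - P s (g s)), fun t => rfl, ?_, ?_, ?_⟩
  · -- continuity of φ
    refine (hcont1.sub hcont2).congr fun t => ?_
    rw [repr1 t, repr2 t]
    rfl
  · -- norm bound
    intro M hM t
    have k1 : ‖∫ s in Set.Iio t, U t s (P s (g s))‖ ≤ N * M / δ := by
      have h := norm_integral_le_of_norm_le (hdom1 t (N * M))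
        ((ae_restrict_mem measurableSet_Iio).mono fun s hs =>
          hbound1 M hM t s (Set.mem_Iic.mpr (le_of_lt hs)))
      rwa [hval1 t (N * M)] at h
    have k2 : ‖∫ s in Set.Ioi t, UQ t s (g s - P s (g s))‖ ≤ N * M / δ := by
      have h := norm_integral_le_of_norm_le (hdom2 t (N * M))
        ((ae_restrict_mem measurableSet_Ioi).mono fun s hs =>
          hbound2 M hM t s (Set.mem_Ici.mpr (le_of_lt hs)))
      rwa [hval2 t (N * M)] at h
    calc ‖(∫ s in Set.Iio t, U t s (P s (g s))) - ∫ s in Set.Ioi t, UQ t s (g s - P s (g s))‖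
        ≤ ‖∫ s in Set.Iio t, U t s (P s (g s))‖ +
          ‖∫ s in Set.Ioi t, UQ t s (g s - P s (g s))‖ := norm_sub_le _ _
      _ ≤ N * M / δ + N * M / δ := add_le_add k1 k2
      _ = (2 * N / δ) * M := by ring
  · -- the mild solution identity
    intro t s hst
    show (∫ τ in Set.Iio t, U t τ (P τ (g τ))) - (∫ τ in Set.Ioi t, UQ t τ (g τ - P τ (g τ)))
      = U t s ((∫ τ in Set.Iio s, U s τ (P τ (g τ))) -
          ∫ τ in Set.Ioi s, UQ s τ (g τ - P τ (g τ))) + ∫ τ in s..t, U t τ (g τ)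
    -- integrability pieces
    have hIic : IntegrableOn (fun τ => U t τ (P τ (g τ))) (Set.Iic t) := by
      rw [integrableOn_Iic_iff_integrableOn_Iio]; exact hi1 t
    have hIioS : IntegrableOn (fun τ => U t τ (P τ (g τ))) (Set.Iio s) :=
      (hi1 t).mono_set (Set.Iio_subset_Iio hst)
    have hIicS : IntegrableOn (fun τ => U t τ (P τ (g τ))) (Set.Iic s) := by
      rw [integrableOn_Iic_iff_integrableOn_Iio]; exact hIioS
    have hIoc1 : IntegrableOn (fun τ => U t τ (P τ (g τ))) (Set.Ioc s t) :=
      hIic.mono_set Set.Ioc_subset_Iic_self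
    -- continuity of τ ↦ U t τ (g τ) on [s, t]
    have hUcontIcc : ∀ x : X, ContinuousOn (fun τ => U t τ x) (Set.Icc s t) := by
      intro x
      exact ContinuousOn.comp (g := fun p : ℝ × ℝ => U p.1 p.2 x)
        (f := fun τ : ℝ => ((t, τ) : ℝ × ℝ)) (hUcont x)
        (Continuous.continuousOn (by fun_prop)) (fun τ hτ => hτ.2)
    obtain ⟨C, hC⟩ := bs_bound hUcontIcc
    have hUg : ContinuousOn (fun τ => U t τ (g τ)) (Set.Icc s t) :=
      strong_cont_apply hC hUcontIcc hgcont
    have hIoc2 : IntegrableOn (fun τ => U t τ (g τ)) (Set.Ioc s t) :=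
      hUg.integrableOn_Icc.mono_set Set.Ioc_subset_Icc_self
    -- pointwise identities
    have key1 : ∀ τ : ℝ, τ < s → U t s (U s τ (P τ (g τ))) = U t τ (P τ (g τ)) := by
      intro τ hτ
      have h := congrArg (fun (L : X →L[ℝ] X) => L (P τ (g τ)))
        (hUcomp t s τ (le_of_lt hτ) hst)
      simpa using h
    have key2 : ∀ τ : ℝ, s ≤ τ → τ ≤ t →
        U t s (UQ s τ (g τ - P τ (g τ))) = U t τ (g τ) - U t τ (P τ (g τ)) := by
      intro τ h1 h2
      have h := congrArg (fun (L : X →L[ℝ] X) => L (UQ s τ (g τ - P τ (g τ))))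
        (hUcomp t τ s h1 h2)
      simp only [ContinuousLinearMap.comp_apply] at h
      rw [← h, hUQleft s τ h1 (g τ), map_sub]
    have key3 : ∀ τ : ℝ, t ≤ τ →
        U t s (UQ s τ (g τ - P τ (g τ))) = UQ t τ (g τ - P τ (g τ)) := by
      intro τ hτ
      have hsτ : s ≤ τ := le_trans hst hτ
      have hPy : P t (U t s (UQ s τ (g τ - P τ (g τ)))) = 0 := by
        have h1 := congrArg (fun (L : X →L[ℝ] X) => L (UQ s τ (g τ - P τ (g τ))))
          (hPU t s hst)
        simp only [ContinuousLinearMap.comp_apply] at h1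
        rw [hUQrange s τ hsτ (g τ), map_zero] at h1
        exact h1.symm
      have hUy : U τ t (U t s (UQ s τ (g τ - P τ (g τ)))) = g τ - P τ (g τ) := by
        have h1 := congrArg (fun (L : X →L[ℝ] X) => L (UQ s τ (g τ - P τ (g τ))))
          (hUcomp τ t s hst hτ)
        simp only [ContinuousLinearMap.comp_apply] at h1
        rw [h1, hUQleft s τ hsτ (g τ)]
      have hPτ : P τ (g τ - P τ (g τ)) = 0 := by
        have h2 := congrArg (fun (L : X →L[ℝ] X) => L (g τ)) (hPproj τ)
        simp only [ContinuousLinearMap.comp_apply] at h2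
        rw [map_sub, h2, sub_self]
      have h3 := hUQright t τ hτ (U t s (UQ s τ (g τ - P τ (g τ))))
      rw [hUy, map_sub, hPτ, map_zero, sub_zero, hPy, sub_zero] at h3
      exact h3.symm
    -- transported integrals
    have hsplit : (Set.Ioc s t) ∪ (Set.Ioi t) = Set.Ioi s := Set.Ioc_union_Ioi_eq_Ioi hst
    have hi2s := hi2 s
    have hint2a : IntegrableOn (fun τ => U t s (UQ s τ (g τ - P τ (g τ)))) (Set.Ioc s t) :=
      (U t s).integrable_comp (hi2s.mono_set (by rw [← hsplit]; exact Set.subset_union_left))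
    have hint2b : IntegrableOn (fun τ => U t s (UQ s τ (g τ - P τ (g τ)))) (Set.Ioi t) :=
      (U t s).integrable_comp (hi2s.mono_set (by rw [← hsplit]; exact Set.subset_union_right))
    have hUφ : U t s ((∫ τ in Set.Iio s, U s τ (P τ (g τ))) -
          ∫ τ in Set.Ioi s, UQ s τ (g τ - P τ (g τ)))
        = (∫ τ in Set.Iio s, U t τ (P τ (g τ)))
          - (((∫ τ in Set.Ioc s t, U t τ (g τ)) - (∫ τ in Set.Ioc s t, U t τ (P τ (g τ))))
             + ∫ τ in Set.Ioi t, UQ t τ (g τ - P τ (g τ))) := by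
      rw [map_sub]
      congr 1
      · rw [← ContinuousLinearMap.integral_comp_comm _ (hi1 s)]
        exact setIntegral_congr_fun measurableSet_Iio (fun τ hτ => key1 τ hτ)
      · rw [← ContinuousLinearMap.integral_comp_comm _ (hi2 s), ← hsplit,
          setIntegral_union (Set.Ioc_disjoint_Ioi le_rfl) measurableSet_Ioi hint2a hint2b]
        congr 1
        · rw [setIntegral_congr_fun measurableSet_Ioc
            (fun τ hτ => key2 τ (le_of_lt hτ.1) hτ.2)]
          exact integral_sub hIoc2 hIoc1
        · exact setIntegral_congr_fun measurableSet_Ioi (fun τ hτ => key3 τ (le_of_lt hτ))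
    have hsplit1 : (∫ τ in Set.Iio t, U t τ (P τ (g τ)))
        = (∫ τ in Set.Iio s, U t τ (P τ (g τ))) + ∫ τ in Set.Ioc s t, U t τ (P τ (g τ)) := by
      calc (∫ τ in Set.Iio t, U t τ (P τ (g τ)))
          = ∫ τ in Set.Iic t, U t τ (P τ (g τ)) := setIntegral_congr_set Iio_ae_eq_Iic
        _ = ∫ τ in Set.Iic s ∪ Set.Ioc s t, U t τ (P τ (g τ)) := by
            rw [Set.Iic_union_Ioc_eq_Iic hst]
        _ = (∫ τ in Set.Iic s, U t τ (P τ (g τ))) + ∫ τ in Set.Ioc s t, U t τ (P τ (g τ)) :=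
            setIntegral_union (Set.Iic_disjoint_Ioc le_rfl) measurableSet_Ioc hIicS hIoc1
        _ = (∫ τ in Set.Iio s, U t τ (P τ (g τ))) + ∫ τ in Set.Ioc s t, U t τ (P τ (g τ)) := by
            rw [setIntegral_congr_set Iio_ae_eq_Iic]
    rw [intervalIntegral.integral_of_le hst, hUφ, hsplit1]
    abel
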